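/- Let n be a natural number with n ≥ 5, let J be the n×n all-ones complex matrix and H = (2/n)·J − I. Then for every real number θ, it is not the case that every entry of exp(i·θ·H) has absolute value 1/√n. In other words, for cliques of size at least 5 no choice of rotation angle θ makes the staggered evolution exp(i·θ·H) flat, so instantaneous uniform mixing is impossible on a single cell of size larger than 4. -/

import Mathlib

open NormedSpace

/-- In a complex Banach algebra, if `u * u = 1` then
`exp ((I*θ) • u) = cos θ • 1 + (I * sin θ) • u`. -/
theorem exp_smul_of_sq_eq_one {𝔸 : Type*} [NormedRing 𝔸] [NormedAlgebra ℂ 𝔸]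
    [CompleteSpace 𝔸] (u : 𝔸) (hu : u * u = 1) (θ : ℝ) :
    exp ((Complex.I * (θ : ℂ)) • u)
      = (Complex.cos θ) • (1 : 𝔸) + (Complex.I * Complex.sin θ) • u := by
  rw [exp_eq_tsum ℂ]
  refine HasSum.tsum_eq ?_
  have hc := (Complex.hasSum_cos' (θ : ℂ)).smul_const (1 : 𝔸)
  have hs := (((Complex.hasSum_sin' (θ : ℂ)).mul_right Complex.I)).smul_const u
  rw [mul_comm Complex.I (Complex.sin (θ : ℂ))]
  refine HasSum.even_add_odd ?_ ?_
  · convert hc using 2 with k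
    rw [smul_pow, pow_mul u, pow_two u, hu, one_pow, smul_smul, div_eq_inv_mul]
    congr 1
    ring
  · convert hs using 2 with k
    rw [smul_pow, pow_succ u, pow_mul u, pow_two u, hu, one_pow, one_mul, smul_smul,
      div_mul_cancel₀ _ Complex.I_ne_zero, div_eq_inv_mul]
    congr 1
    ring

theorem matrix_exp_smul_of_sq_eq_one {n : ℕ} (u : Matrix (Fin n) (Fin n) ℂ)
    (hu : u * u = 1) (θ : ℝ) :
    exp ((Complex.I * (θ : ℂ)) • u)
      = (Complex.cos θ) • (1 : Matrix (Fin n) (Fin n) ℂ) + (Complex.I * Complex.sin θ) • u := by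
  letI : SeminormedRing (Matrix (Fin n) (Fin n) ℂ) := Matrix.linftyOpSemiNormedRing
  letI : NormedRing (Matrix (Fin n) (Fin n) ℂ) := Matrix.linftyOpNormedRing
  letI : NormedAlgebra ℂ (Matrix (Fin n) (Fin n) ℂ) := Matrix.linftyOpNormedAlgebra
  exact exp_smul_of_sq_eq_one u hu θ

theorem grover_exp_not_flat_of_five_le
    (n : ℕ) (hn : 5 ≤ n)
    (J : Matrix (Fin n) (Fin n) ℂ) (hJ : ∀ a b, J a b = 1)
    (H : Matrix (Fin n) (Fin n) ℂ)
    (hH : H = ((2 : ℂ) / (n : ℂ)) • J - 1) :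
    ∀ θ : ℝ, ¬ (∀ a b, ‖(NormedSpace.exp ((Complex.I * (θ : ℂ)) • H)) a b‖
        = 1 / Real.sqrt n) := by
  intro θ hflat
  have hn0 : (n : ℂ) ≠ 0 := by
    exact_mod_cast Nat.cast_ne_zero.mpr (by omega)
  -- J * J = n • J
  have hJJ : J * J = (n : ℂ) • J := by
    ext a b
    simp [Matrix.mul_apply, hJ, Finset.sum_const]
  -- H * H = 1
  have hHH : H * H = 1 := by
    have h2 : (2:ℂ)/(n:ℂ) * ((2:ℂ)/(n:ℂ)) * (n:ℂ) = (2:ℂ)/(n:ℂ) + (2:ℂ)/(n:ℂ) := by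
      field_simp; ring
    rw [hH, sub_mul, mul_sub, mul_sub, Matrix.smul_mul, Matrix.mul_smul, hJJ,
      Matrix.one_mul, Matrix.mul_one, smul_smul, smul_smul, one_mul, h2, add_smul]
    abel
  have hexp := matrix_exp_smul_of_sq_eq_one H hHH θ
  -- pick two distinct indices
  have h01 : (⟨0, by omega⟩ : Fin n) ≠ (⟨1, by omega⟩ : Fin n) := by
    simp [Fin.ext_iff]
  have hentry := hflat ⟨0, by omega⟩ ⟨1, by omega⟩
  rw [hexp] at hentry
  have hH01 : H ⟨0, by omega⟩ ⟨1, by omega⟩ = (2 : ℂ) / (n : ℂ) := by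
    rw [hH]
    simp [Matrix.sub_apply, Matrix.smul_apply, hJ, Matrix.one_apply_ne h01]
  have hone : (1 : Matrix (Fin n) (Fin n) ℂ) ⟨0, by omega⟩ ⟨1, by omega⟩ = 0 :=
    Matrix.one_apply_ne h01
  rw [Matrix.add_apply, Matrix.smul_apply, Matrix.smul_apply, hone, smul_zero, zero_add,
    hH01, smul_eq_mul] at hentry
  -- compute the absolute value
  have hnpos : (0 : ℝ) < n := by exact_mod_cast (by omega : 0 < n)
  have habs : ‖Complex.I * Complex.sin (θ:ℂ) * ((2 : ℂ) / (n : ℂ))‖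
      = |Real.sin θ| * (2 / n) := by
    rw [norm_mul, norm_mul, Complex.norm_I, one_mul, norm_div, ← Complex.ofReal_sin,
      Complex.norm_real, Real.norm_eq_abs, Complex.norm_two, Complex.norm_natCast]
  rw [habs] at hentry
  -- now derive the contradiction
  have hs1 : |Real.sin θ| ≤ 1 := abs_le.mpr ⟨Real.neg_one_le_sin θ, Real.sin_le_one θ⟩
  have hsqrt : Real.sqrt n * Real.sqrt n = n := Real.mul_self_sqrt hnpos.le
  have hsqrtpos : 0 < Real.sqrt n := Real.sqrt_pos.mpr hnpos
  -- from hentry : |sin θ| * (2/n) = 1/√n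
  have h5 : (5 : ℝ) ≤ n := by exact_mod_cast hn
  -- |sin θ| * 2 * √n = n
  have key : |Real.sin θ| * 2 * Real.sqrt n = n := by
    have := hentry
    field_simp at this
    nlinarith [this, hsqrt, hsqrtpos]
  nlinarith [key, hs1, hsqrt, hsqrtpos, h5, abs_nonneg (Real.sin θ)]
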